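/- Variance decomposition of the AIPW score with true nuisances: for every measurable D:𝒳→[0,1], Var(ψ(D, π₁, (μ₁,μ₀))) = Var(D(X)·μ₁(X) + (1−D(X))·μ₀(X)) + E[D(X)²·σ₁²(X)/π₁(X) + (1−D(X))²·σ₀²(X)/(1−π₁(X))]. -/

import Mathlib

open MeasureTheory ProbabilityTheory Filter Topology
open scoped Classical

section Aux
variable {Ω : Type*} {mΩ : MeasurableSpace Ω} {P : MeasureTheory.Measure Ω}

lemma aux_L2_mul {f g : Ω → ℝ} (hf : MemLp f 2 P) (hg : MemLp g 2 P) :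
    Integrable (fun ω => f ω * g ω) P := by
  have h : MemLp (f • g) 1 P :=
    hg.smul hf (hpqr := ⟨by rw [inv_one]; exact ENNReal.inv_two_add_inv_two⟩)
  exact (memLp_one_iff_integrable.mp h).congr (Filter.Eventually.of_forall fun ω => rfl)

lemma aux_bdd_memLp {q : ENNReal} {f g : Ω → ℝ} (hg : MemLp g q P)
    (hf : AEStronglyMeasurable f P) {C : ℝ} (hC : ∀ ω, |f ω| ≤ C) :
    MemLp (fun ω => f ω * g ω) q P := by
  refine MemLp.of_le_mul (c := C) hg (hf.mul hg.aestronglyMeasurable)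
    (Filter.Eventually.of_forall fun ω => ?_)
  calc ‖f ω * g ω‖ = |f ω| * ‖g ω‖ := by rw [norm_mul, Real.norm_eq_abs]
    _ ≤ C * ‖g ω‖ := mul_le_mul_of_nonneg_right (hC ω) (norm_nonneg _)

lemma aux_memLp_bdd {q : ENNReal} {f g : Ω → ℝ} (hf : MemLp f q P)
    (hg : AEStronglyMeasurable g P) {C : ℝ} (hC : ∀ ω, |g ω| ≤ C) :
    MemLp (fun ω => f ω * g ω) q P :=
  (aux_bdd_memLp hf hg hC).ae_eq (Filter.Eventually.of_forall fun ω => mul_comm _ _)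

lemma aux_bdd_mul {f g : Ω → ℝ} (hg : Integrable g P)
    (hf : AEStronglyMeasurable f P) {C : ℝ} (hC : ∀ ω, |f ω| ≤ C) :
    Integrable (fun ω => f ω * g ω) P :=
  Integrable.bdd_mul hg hf (c := C) (Filter.Eventually.of_forall fun ω => by rw [Real.norm_eq_abs]; exact hC ω)

lemma aux_mul_bdd {f g : Ω → ℝ} (hf : Integrable f P)
    (hg : AEStronglyMeasurable g P) {C : ℝ} (hC : ∀ ω, |g ω| ≤ C) :
    Integrable (fun ω => f ω * g ω) P :=
  (aux_bdd_mul hf hg hC).congr (Filter.Eventually.of_forall fun ω => mul_comm _ _)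

lemma aux_integral_mul_condexp {m : MeasurableSpace Ω} (hm : m ≤ mΩ) [IsProbabilityMeasure P]
    {f g h : Ω → ℝ} (hf : StronglyMeasurable[m] f)
    (hfg : Integrable (fun ω => f ω * g ω) P) (hg : Integrable g P)
    (hgh : P[g|m] =ᵐ[P] h) :
    ∫ ω, f ω * g ω ∂P = ∫ ω, f ω * h ω ∂P := by
  have hfg' : Integrable (f * g) P := hfg
  have h1 : P[f * g|m] =ᵐ[P] f * P[g|m] := condExp_mul_of_stronglyMeasurable_left hf hfg' hg
  calc ∫ ω, f ω * g ω ∂P = ∫ ω, (P[f * g|m]) ω ∂P := (integral_condExp hm).symm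
    _ = ∫ ω, f ω * h ω ∂P := by
        refine integral_congr_ae (h1.trans ?_)
        filter_upwards [hgh] with ω hω
        simp [hω]

end Aux

/-- AIPW score `ψ(D, p, (m₁, m₀))` evaluated at a sample point `ω`. -/
noncomputable def aipw {Ω 𝒳 : Type*} (X : Ω → 𝒳) (A Y : Ω → ℝ)
    (D p m₁ m₀ : 𝒳 → ℝ) (ω : Ω) : ℝ :=
  (A ω * D (X ω) + (1 - A ω) * (1 - D (X ω))) /
      (A ω * p (X ω) + (1 - A ω) * (1 - p (X ω))) *
    (Y ω - (A ω * m₁ (X ω) + (1 - A ω) * m₀ (X ω)))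
  + D (X ω) * m₁ (X ω) + (1 - D (X ω)) * m₀ (X ω)

/-- Variance decomposition of the AIPW score with true nuisances: for every
measurable `D : 𝒳 → [0,1]`,
`Var(ψ(D, π₁, (μ₁,μ₀))) = Var(D(X)μ₁(X) + (1−D(X))μ₀(X))
  + E[D(X)²σ₁²(X)/π₁(X) + (1−D(X))²σ₀²(X)/(1−π₁(X))]`. -/
theorem stmt_9 {Ω 𝒳 : Type*} [MeasurableSpace Ω] [MeasurableSpace 𝒳]
    (P : Measure Ω) [IsProbabilityMeasure P]
    (X : Ω → 𝒳) (A Y : Ω → ℝ)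
    (hX : Measurable X) (hA : Measurable A) (hY : Measurable Y)
    (hAbin : ∀ ω, A ω = 0 ∨ A ω = 1) (hYL2 : MemLp Y 2 P)
    (c : ℝ) (hc : c ∈ Set.Ioo (0 : ℝ) (1 / 2))
    (π₁ : 𝒳 → ℝ) (hπ₁m : Measurable π₁) (hπ₁r : ∀ x, π₁ x ∈ Set.Icc c (1 - c))
    (hcondA : P[A | MeasurableSpace.comap X inferInstance]
      =ᵐ[P] fun ω => π₁ (X ω))
    (μ₁ μ₀ : 𝒳 → ℝ) (hμ₁m : Measurable μ₁) (hμ₀m : Measurable μ₀)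
    (hμ₁L2 : MemLp (fun ω => μ₁ (X ω)) 2 P) (hμ₀L2 : MemLp (fun ω => μ₀ (X ω)) 2 P)
    (hcond1 : P[fun ω => A ω * Y ω | MeasurableSpace.comap X inferInstance]
      =ᵐ[P] fun ω => μ₁ (X ω) * π₁ (X ω))
    (hcond0 : P[fun ω => (1 - A ω) * Y ω | MeasurableSpace.comap X inferInstance]
      =ᵐ[P] fun ω => μ₀ (X ω) * (1 - π₁ (X ω)))
    (σ₁sq σ₀sq : 𝒳 → ℝ) (hσ₁m : Measurable σ₁sq) (hσ₀m : Measurable σ₀sq)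
    (hσ₁nn : ∀ x, 0 ≤ σ₁sq x) (hσ₀nn : ∀ x, 0 ≤ σ₀sq x)
    (hσ₁L1 : Integrable (fun ω => σ₁sq (X ω)) P)
    (hσ₀L1 : Integrable (fun ω => σ₀sq (X ω)) P)
    (hcondsq1 : P[fun ω => A ω * Y ω ^ 2 | MeasurableSpace.comap X inferInstance]
      =ᵐ[P] fun ω => (μ₁ (X ω) ^ 2 + σ₁sq (X ω)) * π₁ (X ω))
    (hcondsq0 : P[fun ω => (1 - A ω) * Y ω ^ 2 | MeasurableSpace.comap X inferInstance]
      =ᵐ[P] fun ω => (μ₀ (X ω) ^ 2 + σ₀sq (X ω)) * (1 - π₁ (X ω))) :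
    ∀ D : 𝒳 → ℝ, Measurable D → (∀ x, D x ∈ Set.Icc (0 : ℝ) 1) →
      variance (aipw X A Y D π₁ μ₁ μ₀) P
        = variance (fun ω => D (X ω) * μ₁ (X ω) + (1 - D (X ω)) * μ₀ (X ω)) P
          + ∫ ω, (D (X ω) ^ 2 * σ₁sq (X ω) / π₁ (X ω)
              + (1 - D (X ω)) ^ 2 * σ₀sq (X ω) / (1 - π₁ (X ω))) ∂P := by
  intro D hD hDr
  -- numeric facts
  have hc0 : (0:ℝ) < c := hc.1
  have hpc : ∀ ω, c ≤ π₁ (X ω) := fun ω => (hπ₁r _).1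
  have hpc1 : ∀ ω, π₁ (X ω) ≤ 1 - c := fun ω => (hπ₁r _).2
  have hppos : ∀ ω, 0 < π₁ (X ω) := fun ω => lt_of_lt_of_le hc0 (hpc ω)
  have hp0 : ∀ ω, π₁ (X ω) ≠ 0 := fun ω => (hppos ω).ne'
  have h1ppos : ∀ ω, 0 < 1 - π₁ (X ω) := fun ω => by have := hpc1 ω; linarith
  have h1p0 : ∀ ω, (1 - π₁ (X ω)) ≠ 0 := fun ω => (h1ppos ω).ne'
  have h1pc : ∀ ω, c ≤ 1 - π₁ (X ω) := fun ω => by have := hpc1 ω; linarith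
  have hpbd : ∀ ω, |π₁ (X ω)| ≤ 1 := fun ω => by
    rw [abs_of_pos (hppos ω)]; have := hpc1 ω; linarith
  have h1pbd : ∀ ω, |1 - π₁ (X ω)| ≤ 1 := fun ω => by
    rw [abs_of_pos (h1ppos ω)]; have := hpc ω; linarith
  have hAbd : ∀ ω, |A ω| ≤ 1 := fun ω => by rcases hAbin ω with h | h <;> simp [h]
  have h1Abd : ∀ ω, |1 - A ω| ≤ 1 := fun ω => by rcases hAbin ω with h | h <;> simp [h]
  have hDbd : ∀ ω, |D (X ω)| ≤ 1 := fun ω => by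
    rw [abs_of_nonneg (hDr _).1]; exact (hDr _).2
  have h1Dbd : ∀ ω, |1 - D (X ω)| ≤ 1 := fun ω => by
    have h := hDr (X ω)
    rw [abs_of_nonneg (by linarith [h.2])]; linarith [h.1]
  have hw1bd : ∀ ω, |D (X ω) / π₁ (X ω)| ≤ 1 / c := fun ω => by
    rw [abs_div, abs_of_nonneg (hDr _).1, abs_of_pos (hppos ω)]
    exact div_le_div₀ zero_le_one (hDr _).2 hc0 (hpc ω)
  have hw0bd : ∀ ω, |(1 - D (X ω)) / (1 - π₁ (X ω))| ≤ 1 / c := fun ω => by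
    have h := hDr (X ω)
    rw [abs_div, abs_of_nonneg (by linarith [h.2]), abs_of_pos (h1ppos ω)]
    exact div_le_div₀ zero_le_one (by linarith [h.1]) hc0 (h1pc ω)
  have hw1sqbd : ∀ ω, |(D (X ω) / π₁ (X ω)) ^ 2| ≤ (1 / c) ^ 2 := fun ω => by
    rw [abs_pow]; exact pow_le_pow_left₀ (abs_nonneg _) (hw1bd ω) 2
  have hw0sqbd : ∀ ω, |((1 - D (X ω)) / (1 - π₁ (X ω))) ^ 2| ≤ (1 / c) ^ 2 := fun ω => by
    rw [abs_pow]; exact pow_le_pow_left₀ (abs_nonneg _) (hw0bd ω) 2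
  -- measurability
  have hdm : Measurable fun ω => D (X ω) := hD.comp hX
  have hpm : Measurable fun ω => π₁ (X ω) := hπ₁m.comp hX
  have hw1m : Measurable fun ω => D (X ω) / π₁ (X ω) := hdm.div hpm
  have hw0m : Measurable fun ω => (1 - D (X ω)) / (1 - π₁ (X ω)) :=
    (measurable_const.sub hdm).div (measurable_const.sub hpm)
  have hw1sqm : Measurable fun ω => (D (X ω) / π₁ (X ω)) ^ 2 := hw1m.pow_const 2
  have hw0sqm : Measurable fun ω => ((1 - D (X ω)) / (1 - π₁ (X ω))) ^ 2 := hw0m.pow_const 2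
  have hXc : Measurable[MeasurableSpace.comap X inferInstance] X := fun s hs => ⟨s, hs, rfl⟩
  have hSM : ∀ {φ : 𝒳 → ℝ}, Measurable φ →
      StronglyMeasurable[MeasurableSpace.comap X inferInstance] fun ω => φ (X ω) :=
    fun hφ => (hφ.comp hXc).stronglyMeasurable
  have hm : MeasurableSpace.comap X inferInstance ≤ _ := hX.comap_le
  -- integrability / L2 facts
  have hAL2 : MemLp A 2 P := MemLp.of_bound hA.aestronglyMeasurable 1
    (Filter.Eventually.of_forall fun ω => by rw [Real.norm_eq_abs]; exact hAbd ω)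
  have h1AL2 : MemLp (fun ω => 1 - A ω) 2 P :=
    MemLp.of_bound (measurable_const.sub hA).aestronglyMeasurable 1
      (Filter.Eventually.of_forall fun ω => by rw [Real.norm_eq_abs]; exact h1Abd ω)
  have hAint : Integrable A P := hAL2.integrable one_le_two
  have h1Aint : Integrable (fun ω => 1 - A ω) P := h1AL2.integrable one_le_two
  have hAYL2 : MemLp (fun ω => A ω * Y ω) 2 P :=
    aux_bdd_memLp hYL2 hA.aestronglyMeasurable hAbd
  have h1AYL2 : MemLp (fun ω => (1 - A ω) * Y ω) 2 P :=
    aux_bdd_memLp hYL2 (measurable_const.sub hA).aestronglyMeasurable h1Abd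
  have hAYint : Integrable (fun ω => A ω * Y ω) P := hAYL2.integrable one_le_two
  have h1AYint : Integrable (fun ω => (1 - A ω) * Y ω) P := h1AYL2.integrable one_le_two
  have hY2int : Integrable (fun ω => Y ω ^ 2) P := hYL2.integrable_sq
  have hAY2int : Integrable (fun ω => A ω * Y ω ^ 2) P :=
    aux_bdd_mul hY2int hA.aestronglyMeasurable hAbd
  have h1AY2int : Integrable (fun ω => (1 - A ω) * Y ω ^ 2) P :=
    aux_bdd_mul hY2int (measurable_const.sub hA).aestronglyMeasurable h1Abd
  have hm1sqint : Integrable (fun ω => μ₁ (X ω) ^ 2) P := hμ₁L2.integrable_sq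
  have hm0sqint : Integrable (fun ω => μ₀ (X ω) ^ 2) P := hμ₀L2.integrable_sq
  have hw1m1L2 : MemLp (fun ω => D (X ω) / π₁ (X ω) * μ₁ (X ω)) 2 P :=
    aux_bdd_memLp hμ₁L2 hw1m.aestronglyMeasurable hw1bd
  have hw0m0L2 : MemLp (fun ω => (1 - D (X ω)) / (1 - π₁ (X ω)) * μ₀ (X ω)) 2 P :=
    aux_bdd_memLp hμ₀L2 hw0m.aestronglyMeasurable hw0bd
  have hw1sqm1L2 : MemLp (fun ω => (D (X ω) / π₁ (X ω)) ^ 2 * μ₁ (X ω)) 2 P :=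
    aux_bdd_memLp hμ₁L2 hw1sqm.aestronglyMeasurable hw1sqbd
  have hw0sqm0L2 : MemLp (fun ω => ((1 - D (X ω)) / (1 - π₁ (X ω))) ^ 2 * μ₀ (X ω)) 2 P :=
    aux_bdd_memLp hμ₀L2 hw0sqm.aestronglyMeasurable hw0sqbd
  have hm1pL2 : MemLp (fun ω => μ₁ (X ω) * π₁ (X ω)) 2 P :=
    aux_memLp_bdd hμ₁L2 hpm.aestronglyMeasurable hpbd
  have hm01pL2 : MemLp (fun ω => μ₀ (X ω) * (1 - π₁ (X ω))) 2 P :=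
    aux_memLp_bdd hμ₀L2 (measurable_const.sub hpm).aestronglyMeasurable h1pbd
  -- conditional expectation of 1 - A
  have h1mA : P[fun ω => 1 - A ω|MeasurableSpace.comap X inferInstance]
      =ᵐ[P] fun ω => 1 - π₁ (X ω) := by
    have h1 : P[(fun _ => (1:ℝ)) - A|MeasurableSpace.comap X inferInstance]
        =ᵐ[P] P[fun _ => (1:ℝ)|MeasurableSpace.comap X inferInstance]
          - P[A|MeasurableSpace.comap X inferInstance] :=
      condExp_sub (integrable_const 1) hAint _
    refine EventuallyEq.trans ?_ (h1.trans ?_)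
    · exact EventuallyEq.rfl
    · have h2 := condExp_const hm (1:ℝ) (μ := P)
      filter_upwards [hcondA] with ω hω
      simp [h2, hω]
  -- key conditional-expectation integral identities
  have K1 : ∫ ω, D (X ω) / π₁ (X ω) * (A ω * Y ω) ∂P
      = ∫ ω, D (X ω) / π₁ (X ω) * (μ₁ (X ω) * π₁ (X ω)) ∂P :=
    aux_integral_mul_condexp hm (hSM (hD.div hπ₁m))
      (aux_bdd_mul hAYint hw1m.aestronglyMeasurable hw1bd) hAYint hcond1
  have K2 : ∫ ω, D (X ω) / π₁ (X ω) * μ₁ (X ω) * A ω ∂P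
      = ∫ ω, D (X ω) / π₁ (X ω) * μ₁ (X ω) * π₁ (X ω) ∂P :=
    aux_integral_mul_condexp hm (hSM ((hD.div hπ₁m).mul hμ₁m))
      (aux_mul_bdd (hw1m1L2.integrable one_le_two) hA.aestronglyMeasurable hAbd)
      hAint hcondA
  have K6 : ∫ ω, (1 - D (X ω)) / (1 - π₁ (X ω)) * ((1 - A ω) * Y ω) ∂P
      = ∫ ω, (1 - D (X ω)) / (1 - π₁ (X ω)) * (μ₀ (X ω) * (1 - π₁ (X ω))) ∂P :=
    aux_integral_mul_condexp hm (hSM ((measurable_const.sub hD).div (measurable_const.sub hπ₁m)))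
      (aux_bdd_mul h1AYint hw0m.aestronglyMeasurable hw0bd) h1AYint hcond0
  have K7 : ∫ ω, (1 - D (X ω)) / (1 - π₁ (X ω)) * μ₀ (X ω) * (1 - A ω) ∂P
      = ∫ ω, (1 - D (X ω)) / (1 - π₁ (X ω)) * μ₀ (X ω) * (1 - π₁ (X ω)) ∂P :=
    aux_integral_mul_condexp hm
      (hSM (((measurable_const.sub hD).div (measurable_const.sub hπ₁m)).mul hμ₀m))
      (aux_mul_bdd (hw0m0L2.integrable one_le_two) (measurable_const.sub hA).aestronglyMeasurable
        h1Abd)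
      h1Aint h1mA
  have K3 : ∫ ω, (D (X ω) / π₁ (X ω)) ^ 2 * (A ω * Y ω ^ 2) ∂P
      = ∫ ω, (D (X ω) / π₁ (X ω)) ^ 2 * ((μ₁ (X ω) ^ 2 + σ₁sq (X ω)) * π₁ (X ω)) ∂P :=
    aux_integral_mul_condexp hm (hSM ((hD.div hπ₁m).pow_const 2))
      (aux_bdd_mul hAY2int hw1sqm.aestronglyMeasurable hw1sqbd) hAY2int hcondsq1
  have K4 : ∫ ω, (D (X ω) / π₁ (X ω)) ^ 2 * μ₁ (X ω) * (A ω * Y ω) ∂P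
      = ∫ ω, (D (X ω) / π₁ (X ω)) ^ 2 * μ₁ (X ω) * (μ₁ (X ω) * π₁ (X ω)) ∂P :=
    aux_integral_mul_condexp hm (hSM (((hD.div hπ₁m).pow_const 2).mul hμ₁m))
      (aux_L2_mul hw1sqm1L2 hAYL2) hAYint hcond1
  have K5 : ∫ ω, (D (X ω) / π₁ (X ω)) ^ 2 * μ₁ (X ω) ^ 2 * A ω ∂P
      = ∫ ω, (D (X ω) / π₁ (X ω)) ^ 2 * μ₁ (X ω) ^ 2 * π₁ (X ω) ∂P :=
    aux_integral_mul_condexp hm (hSM (((hD.div hπ₁m).pow_const 2).mul (hμ₁m.pow_const 2)))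
      (aux_mul_bdd (aux_bdd_mul hm1sqint hw1sqm.aestronglyMeasurable hw1sqbd)
        hA.aestronglyMeasurable hAbd)
      hAint hcondA
  have K8 : ∫ ω, ((1 - D (X ω)) / (1 - π₁ (X ω))) ^ 2 * ((1 - A ω) * Y ω ^ 2) ∂P
      = ∫ ω, ((1 - D (X ω)) / (1 - π₁ (X ω))) ^ 2
          * ((μ₀ (X ω) ^ 2 + σ₀sq (X ω)) * (1 - π₁ (X ω))) ∂P :=
    aux_integral_mul_condexp hm
      (hSM (((measurable_const.sub hD).div (measurable_const.sub hπ₁m)).pow_const 2))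
      (aux_bdd_mul h1AY2int hw0sqm.aestronglyMeasurable hw0sqbd) h1AY2int hcondsq0
  have K9 : ∫ ω, ((1 - D (X ω)) / (1 - π₁ (X ω))) ^ 2 * μ₀ (X ω) * ((1 - A ω) * Y ω) ∂P
      = ∫ ω, ((1 - D (X ω)) / (1 - π₁ (X ω))) ^ 2 * μ₀ (X ω)
          * (μ₀ (X ω) * (1 - π₁ (X ω))) ∂P :=
    aux_integral_mul_condexp hm
      (hSM ((((measurable_const.sub hD).div (measurable_const.sub hπ₁m)).pow_const 2).mul hμ₀m))
      (aux_L2_mul hw0sqm0L2 h1AYL2) h1AYint hcond0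
  have K10 : ∫ ω, ((1 - D (X ω)) / (1 - π₁ (X ω))) ^ 2 * μ₀ (X ω) ^ 2 * (1 - A ω) ∂P
      = ∫ ω, ((1 - D (X ω)) / (1 - π₁ (X ω))) ^ 2 * μ₀ (X ω) ^ 2 * (1 - π₁ (X ω)) ∂P :=
    aux_integral_mul_condexp hm
      (hSM ((((measurable_const.sub hD).div (measurable_const.sub hπ₁m)).pow_const 2).mul
        (hμ₀m.pow_const 2)))
      (aux_mul_bdd (aux_bdd_mul hm0sqint hw0sqm.aestronglyMeasurable hw0sqbd)
        (measurable_const.sub hA).aestronglyMeasurable h1Abd)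
      h1Aint h1mA
  -- the outcome-model part and residual part
  set g : Ω → ℝ := fun ω => D (X ω) * μ₁ (X ω) + (1 - D (X ω)) * μ₀ (X ω) with hgdef
  set R : Ω → ℝ := fun ω =>
    A ω * (D (X ω) / π₁ (X ω) * (Y ω - μ₁ (X ω))) +
      (1 - A ω) * ((1 - D (X ω)) / (1 - π₁ (X ω)) * (Y ω - μ₀ (X ω))) with hRdef
  have hgSM : StronglyMeasurable[MeasurableSpace.comap X inferInstance] g := by
    rw [hgdef]
    exact hSM ((hD.mul hμ₁m).add ((measurable_const.sub hD).mul hμ₀m))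
  have hgL2 : MemLp g 2 P := by
    rw [hgdef]
    exact (aux_bdd_memLp hμ₁L2 hdm.aestronglyMeasurable hDbd).add
      (aux_bdd_memLp hμ₀L2 (measurable_const.sub hdm).aestronglyMeasurable h1Dbd)
  have hRL2 : MemLp R 2 P := by
    rw [hRdef]
    exact (aux_bdd_memLp (aux_bdd_memLp (hYL2.sub hμ₁L2) hw1m.aestronglyMeasurable hw1bd)
        hA.aestronglyMeasurable hAbd).add
      (aux_bdd_memLp (aux_bdd_memLp (hYL2.sub hμ₀L2) hw0m.aestronglyMeasurable hw0bd)
        (measurable_const.sub hA).aestronglyMeasurable h1Abd)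
  have haipw : aipw X A Y D π₁ μ₁ μ₀ = fun ω => R ω + g ω := by
    funext ω
    rcases hAbin ω with h | h <;> simp only [aipw, hRdef, hgdef, h] <;> ring_nf
  -- expectation of the residual is zero
  have it1 : Integrable (fun ω => D (X ω) / π₁ (X ω) * (A ω * Y ω)) P :=
    aux_bdd_mul hAYint hw1m.aestronglyMeasurable hw1bd
  have it2 : Integrable (fun ω => D (X ω) / π₁ (X ω) * μ₁ (X ω) * A ω) P :=
    aux_mul_bdd (hw1m1L2.integrable one_le_two) hA.aestronglyMeasurable hAbd
  have it3 : Integrable (fun ω => (1 - D (X ω)) / (1 - π₁ (X ω)) * ((1 - A ω) * Y ω)) P :=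
    aux_bdd_mul h1AYint hw0m.aestronglyMeasurable hw0bd
  have it4 : Integrable (fun ω => (1 - D (X ω)) / (1 - π₁ (X ω)) * μ₀ (X ω) * (1 - A ω)) P :=
    aux_mul_bdd (hw0m0L2.integrable one_le_two) (measurable_const.sub hA).aestronglyMeasurable
      h1Abd
  have hER : ∫ ω, R ω ∂P = 0 := by
    have hd1 : ∫ ω, R ω ∂P =
        ∫ ω, (D (X ω) / π₁ (X ω) * (A ω * Y ω) - D (X ω) / π₁ (X ω) * μ₁ (X ω) * A ω)
          + ((1 - D (X ω)) / (1 - π₁ (X ω)) * ((1 - A ω) * Y ω)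
              - (1 - D (X ω)) / (1 - π₁ (X ω)) * μ₀ (X ω) * (1 - A ω)) ∂P :=
      integral_congr_ae (Filter.Eventually.of_forall fun ω => by simp only [hRdef]; ring)
    have it12 : Integrable (fun ω => D (X ω) / π₁ (X ω) * (A ω * Y ω)
        - D (X ω) / π₁ (X ω) * μ₁ (X ω) * A ω) P := it1.sub it2
    have it34 : Integrable (fun ω => (1 - D (X ω)) / (1 - π₁ (X ω)) * ((1 - A ω) * Y ω)
        - (1 - D (X ω)) / (1 - π₁ (X ω)) * μ₀ (X ω) * (1 - A ω)) P := it3.sub it4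
    rw [hd1, integral_add it12 it34, integral_sub it1 it2,
      integral_sub it3 it4, K1, K2, K6, K7]
    have e1 : ∫ ω, D (X ω) / π₁ (X ω) * (μ₁ (X ω) * π₁ (X ω)) ∂P
        = ∫ ω, D (X ω) / π₁ (X ω) * μ₁ (X ω) * π₁ (X ω) ∂P :=
      integral_congr_ae (Filter.Eventually.of_forall fun ω => by ring)
    have e2 : ∫ ω, (1 - D (X ω)) / (1 - π₁ (X ω)) * (μ₀ (X ω) * (1 - π₁ (X ω))) ∂P
        = ∫ ω, (1 - D (X ω)) / (1 - π₁ (X ω)) * μ₀ (X ω) * (1 - π₁ (X ω)) ∂P :=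
      integral_congr_ae (Filter.Eventually.of_forall fun ω => by ring)
    rw [e1, e2]; ring
  -- cross term vanishes
  have hw1gL2 : MemLp (fun ω => D (X ω) / π₁ (X ω) * g ω) 2 P :=
    aux_bdd_memLp hgL2 hw1m.aestronglyMeasurable hw1bd
  have hw0gL2 : MemLp (fun ω => (1 - D (X ω)) / (1 - π₁ (X ω)) * g ω) 2 P :=
    aux_bdd_memLp hgL2 hw0m.aestronglyMeasurable hw0bd
  have K11 : ∫ ω, D (X ω) / π₁ (X ω) * g ω * (A ω * Y ω) ∂P
      = ∫ ω, D (X ω) / π₁ (X ω) * g ω * (μ₁ (X ω) * π₁ (X ω)) ∂P :=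
    aux_integral_mul_condexp hm ((hSM (hD.div hπ₁m)).mul hgSM)
      (aux_L2_mul hw1gL2 hAYL2) hAYint hcond1
  have K12 : ∫ ω, D (X ω) / π₁ (X ω) * (g ω * μ₁ (X ω)) * A ω ∂P
      = ∫ ω, D (X ω) / π₁ (X ω) * (g ω * μ₁ (X ω)) * π₁ (X ω) ∂P :=
    aux_integral_mul_condexp hm ((hSM (hD.div hπ₁m)).mul (hgSM.mul (hSM hμ₁m)))
      (aux_mul_bdd (aux_bdd_mul (aux_L2_mul hgL2 hμ₁L2) hw1m.aestronglyMeasurable hw1bd)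
        hA.aestronglyMeasurable hAbd)
      hAint hcondA
  have K13 : ∫ ω, (1 - D (X ω)) / (1 - π₁ (X ω)) * g ω * ((1 - A ω) * Y ω) ∂P
      = ∫ ω, (1 - D (X ω)) / (1 - π₁ (X ω)) * g ω * (μ₀ (X ω) * (1 - π₁ (X ω))) ∂P :=
    aux_integral_mul_condexp hm
      ((hSM ((measurable_const.sub hD).div (measurable_const.sub hπ₁m))).mul hgSM)
      (aux_L2_mul hw0gL2 h1AYL2) h1AYint hcond0
  have K14 : ∫ ω, (1 - D (X ω)) / (1 - π₁ (X ω)) * (g ω * μ₀ (X ω)) * (1 - A ω) ∂P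
      = ∫ ω, (1 - D (X ω)) / (1 - π₁ (X ω)) * (g ω * μ₀ (X ω)) * (1 - π₁ (X ω)) ∂P :=
    aux_integral_mul_condexp hm
      ((hSM ((measurable_const.sub hD).div (measurable_const.sub hπ₁m))).mul
        (hgSM.mul (hSM hμ₀m)))
      (aux_mul_bdd (aux_bdd_mul (aux_L2_mul hgL2 hμ₀L2) hw0m.aestronglyMeasurable hw0bd)
        (measurable_const.sub hA).aestronglyMeasurable h1Abd)
      h1Aint h1mA
  have hERg : ∫ ω, R ω * g ω ∂P = 0 := by
    have jt1 : Integrable (fun ω => D (X ω) / π₁ (X ω) * g ω * (A ω * Y ω)) P :=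
      aux_L2_mul hw1gL2 hAYL2
    have jt2 : Integrable (fun ω => D (X ω) / π₁ (X ω) * (g ω * μ₁ (X ω)) * A ω) P :=
      aux_mul_bdd (aux_bdd_mul (aux_L2_mul hgL2 hμ₁L2) hw1m.aestronglyMeasurable hw1bd)
        hA.aestronglyMeasurable hAbd
    have jt3 : Integrable (fun ω => (1 - D (X ω)) / (1 - π₁ (X ω)) * g ω
        * ((1 - A ω) * Y ω)) P := aux_L2_mul hw0gL2 h1AYL2
    have jt4 : Integrable (fun ω => (1 - D (X ω)) / (1 - π₁ (X ω)) * (g ω * μ₀ (X ω))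
        * (1 - A ω)) P :=
      aux_mul_bdd (aux_bdd_mul (aux_L2_mul hgL2 hμ₀L2) hw0m.aestronglyMeasurable hw0bd)
        (measurable_const.sub hA).aestronglyMeasurable h1Abd
    have jt12 : Integrable (fun ω => D (X ω) / π₁ (X ω) * g ω * (A ω * Y ω)
        - D (X ω) / π₁ (X ω) * (g ω * μ₁ (X ω)) * A ω) P := jt1.sub jt2
    have jt34 : Integrable (fun ω => (1 - D (X ω)) / (1 - π₁ (X ω)) * g ω * ((1 - A ω) * Y ω)
        - (1 - D (X ω)) / (1 - π₁ (X ω)) * (g ω * μ₀ (X ω)) * (1 - A ω)) P := jt3.sub jt4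
    have hd1 : ∫ ω, R ω * g ω ∂P =
        ∫ ω, (D (X ω) / π₁ (X ω) * g ω * (A ω * Y ω)
            - D (X ω) / π₁ (X ω) * (g ω * μ₁ (X ω)) * A ω)
          + ((1 - D (X ω)) / (1 - π₁ (X ω)) * g ω * ((1 - A ω) * Y ω)
            - (1 - D (X ω)) / (1 - π₁ (X ω)) * (g ω * μ₀ (X ω)) * (1 - A ω)) ∂P :=
      integral_congr_ae (Filter.Eventually.of_forall fun ω => by simp only [hRdef]; ring)
    rw [hd1, integral_add jt12 jt34, integral_sub jt1 jt2, integral_sub jt3 jt4,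
      K11, K12, K13, K14]
    have e1 : ∫ ω, D (X ω) / π₁ (X ω) * g ω * (μ₁ (X ω) * π₁ (X ω)) ∂P
        = ∫ ω, D (X ω) / π₁ (X ω) * (g ω * μ₁ (X ω)) * π₁ (X ω) ∂P :=
      integral_congr_ae (Filter.Eventually.of_forall fun ω => by ring)
    have e2 : ∫ ω, (1 - D (X ω)) / (1 - π₁ (X ω)) * g ω * (μ₀ (X ω) * (1 - π₁ (X ω))) ∂P
        = ∫ ω, (1 - D (X ω)) / (1 - π₁ (X ω)) * (g ω * μ₀ (X ω)) * (1 - π₁ (X ω)) ∂P :=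
      integral_congr_ae (Filter.Eventually.of_forall fun ω => by ring)
    rw [e1, e2]; ring
  -- second moment of residual
  have ia1 : Integrable (fun ω => (D (X ω) / π₁ (X ω)) ^ 2 * (A ω * Y ω ^ 2)) P :=
    aux_bdd_mul hAY2int hw1sqm.aestronglyMeasurable hw1sqbd
  have ia2 : Integrable (fun ω => (D (X ω) / π₁ (X ω)) ^ 2 * μ₁ (X ω) * (A ω * Y ω)) P :=
    aux_L2_mul hw1sqm1L2 hAYL2
  have ia3 : Integrable (fun ω => (D (X ω) / π₁ (X ω)) ^ 2 * μ₁ (X ω) ^ 2 * A ω) P :=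
    aux_mul_bdd (aux_bdd_mul hm1sqint hw1sqm.aestronglyMeasurable hw1sqbd)
      hA.aestronglyMeasurable hAbd
  have ib1 : Integrable (fun ω => ((1 - D (X ω)) / (1 - π₁ (X ω))) ^ 2
      * ((1 - A ω) * Y ω ^ 2)) P :=
    aux_bdd_mul h1AY2int hw0sqm.aestronglyMeasurable hw0sqbd
  have ib2 : Integrable (fun ω => ((1 - D (X ω)) / (1 - π₁ (X ω))) ^ 2 * μ₀ (X ω)
      * ((1 - A ω) * Y ω)) P := aux_L2_mul hw0sqm0L2 h1AYL2
  have ib3 : Integrable (fun ω => ((1 - D (X ω)) / (1 - π₁ (X ω))) ^ 2 * μ₀ (X ω) ^ 2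
      * (1 - A ω)) P :=
    aux_mul_bdd (aux_bdd_mul hm0sqint hw0sqm.aestronglyMeasurable hw0sqbd)
      (measurable_const.sub hA).aestronglyMeasurable h1Abd
  have ja1 : Integrable (fun ω => (D (X ω) / π₁ (X ω)) ^ 2
      * ((μ₁ (X ω) ^ 2 + σ₁sq (X ω)) * π₁ (X ω))) P :=
    aux_bdd_mul (aux_mul_bdd (hm1sqint.add hσ₁L1) hpm.aestronglyMeasurable hpbd)
      hw1sqm.aestronglyMeasurable hw1sqbd
  have ja2 : Integrable (fun ω => (D (X ω) / π₁ (X ω)) ^ 2 * μ₁ (X ω)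
      * (μ₁ (X ω) * π₁ (X ω))) P := aux_L2_mul hw1sqm1L2 hm1pL2
  have ja3 : Integrable (fun ω => (D (X ω) / π₁ (X ω)) ^ 2 * μ₁ (X ω) ^ 2 * π₁ (X ω)) P :=
    aux_mul_bdd (aux_bdd_mul hm1sqint hw1sqm.aestronglyMeasurable hw1sqbd)
      hpm.aestronglyMeasurable hpbd
  have jb1 : Integrable (fun ω => ((1 - D (X ω)) / (1 - π₁ (X ω))) ^ 2
      * ((μ₀ (X ω) ^ 2 + σ₀sq (X ω)) * (1 - π₁ (X ω)))) P :=
    aux_bdd_mul (aux_mul_bdd (hm0sqint.add hσ₀L1) (measurable_const.sub hpm).aestronglyMeasurable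
        h1pbd)
      hw0sqm.aestronglyMeasurable hw0sqbd
  have jb2 : Integrable (fun ω => ((1 - D (X ω)) / (1 - π₁ (X ω))) ^ 2 * μ₀ (X ω)
      * (μ₀ (X ω) * (1 - π₁ (X ω)))) P := aux_L2_mul hw0sqm0L2 hm01pL2
  have jb3 : Integrable (fun ω => ((1 - D (X ω)) / (1 - π₁ (X ω))) ^ 2 * μ₀ (X ω) ^ 2
      * (1 - π₁ (X ω))) P :=
    aux_mul_bdd (aux_bdd_mul hm0sqint hw0sqm.aestronglyMeasurable hw0sqbd)
      (measurable_const.sub hpm).aestronglyMeasurable h1pbd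
  have hER2 : ∫ ω, R ω ^ 2 ∂P
      = ∫ ω, (D (X ω) ^ 2 * σ₁sq (X ω) / π₁ (X ω)
          + (1 - D (X ω)) ^ 2 * σ₀sq (X ω) / (1 - π₁ (X ω))) ∂P := by
    have ia2' : Integrable (fun ω => 2 * ((D (X ω) / π₁ (X ω)) ^ 2 * μ₁ (X ω)
        * (A ω * Y ω))) P := ia2.const_mul 2
    have ib2' : Integrable (fun ω => 2 * (((1 - D (X ω)) / (1 - π₁ (X ω))) ^ 2 * μ₀ (X ω)
        * ((1 - A ω) * Y ω))) P := ib2.const_mul 2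
    have iA : Integrable (fun ω => (D (X ω) / π₁ (X ω)) ^ 2 * (A ω * Y ω ^ 2)
        - 2 * ((D (X ω) / π₁ (X ω)) ^ 2 * μ₁ (X ω) * (A ω * Y ω))) P := ia1.sub ia2'
    have iA' : Integrable (fun ω => (D (X ω) / π₁ (X ω)) ^ 2 * (A ω * Y ω ^ 2)
        - 2 * ((D (X ω) / π₁ (X ω)) ^ 2 * μ₁ (X ω) * (A ω * Y ω))
        + (D (X ω) / π₁ (X ω)) ^ 2 * μ₁ (X ω) ^ 2 * A ω) P := iA.add ia3
    have iB : Integrable (fun ω => ((1 - D (X ω)) / (1 - π₁ (X ω))) ^ 2 * ((1 - A ω) * Y ω ^ 2)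
        - 2 * (((1 - D (X ω)) / (1 - π₁ (X ω))) ^ 2 * μ₀ (X ω) * ((1 - A ω) * Y ω))) P :=
      ib1.sub ib2'
    have iB' : Integrable (fun ω => ((1 - D (X ω)) / (1 - π₁ (X ω))) ^ 2 * ((1 - A ω) * Y ω ^ 2)
        - 2 * (((1 - D (X ω)) / (1 - π₁ (X ω))) ^ 2 * μ₀ (X ω) * ((1 - A ω) * Y ω))
        + ((1 - D (X ω)) / (1 - π₁ (X ω))) ^ 2 * μ₀ (X ω) ^ 2 * (1 - A ω)) P := iB.add ib3
    have ja2' : Integrable (fun ω => 2 * ((D (X ω) / π₁ (X ω)) ^ 2 * μ₁ (X ω)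
        * (μ₁ (X ω) * π₁ (X ω)))) P := ja2.const_mul 2
    have jb2' : Integrable (fun ω => 2 * (((1 - D (X ω)) / (1 - π₁ (X ω))) ^ 2 * μ₀ (X ω)
        * (μ₀ (X ω) * (1 - π₁ (X ω))))) P := jb2.const_mul 2
    have jA : Integrable (fun ω => (D (X ω) / π₁ (X ω)) ^ 2
        * ((μ₁ (X ω) ^ 2 + σ₁sq (X ω)) * π₁ (X ω))
        - 2 * ((D (X ω) / π₁ (X ω)) ^ 2 * μ₁ (X ω) * (μ₁ (X ω) * π₁ (X ω)))) P := ja1.sub ja2'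
    have jA' : Integrable (fun ω => (D (X ω) / π₁ (X ω)) ^ 2
        * ((μ₁ (X ω) ^ 2 + σ₁sq (X ω)) * π₁ (X ω))
        - 2 * ((D (X ω) / π₁ (X ω)) ^ 2 * μ₁ (X ω) * (μ₁ (X ω) * π₁ (X ω)))
        + (D (X ω) / π₁ (X ω)) ^ 2 * μ₁ (X ω) ^ 2 * π₁ (X ω)) P := jA.add ja3
    have jB : Integrable (fun ω => ((1 - D (X ω)) / (1 - π₁ (X ω))) ^ 2
        * ((μ₀ (X ω) ^ 2 + σ₀sq (X ω)) * (1 - π₁ (X ω)))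
        - 2 * (((1 - D (X ω)) / (1 - π₁ (X ω))) ^ 2 * μ₀ (X ω)
          * (μ₀ (X ω) * (1 - π₁ (X ω))))) P := jb1.sub jb2'
    have jB' : Integrable (fun ω => ((1 - D (X ω)) / (1 - π₁ (X ω))) ^ 2
        * ((μ₀ (X ω) ^ 2 + σ₀sq (X ω)) * (1 - π₁ (X ω)))
        - 2 * (((1 - D (X ω)) / (1 - π₁ (X ω))) ^ 2 * μ₀ (X ω)
          * (μ₀ (X ω) * (1 - π₁ (X ω))))
        + ((1 - D (X ω)) / (1 - π₁ (X ω))) ^ 2 * μ₀ (X ω) ^ 2 * (1 - π₁ (X ω))) P := jB.add jb3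
    have hsplR : ∫ ω, R ω ^ 2 ∂P =
        (∫ ω, (D (X ω) / π₁ (X ω)) ^ 2 * (A ω * Y ω ^ 2) ∂P
          - 2 * ∫ ω, (D (X ω) / π₁ (X ω)) ^ 2 * μ₁ (X ω) * (A ω * Y ω) ∂P
          + ∫ ω, (D (X ω) / π₁ (X ω)) ^ 2 * μ₁ (X ω) ^ 2 * A ω ∂P)
        + (∫ ω, ((1 - D (X ω)) / (1 - π₁ (X ω))) ^ 2 * ((1 - A ω) * Y ω ^ 2) ∂P
          - 2 * ∫ ω, ((1 - D (X ω)) / (1 - π₁ (X ω))) ^ 2 * μ₀ (X ω) * ((1 - A ω) * Y ω) ∂P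
          + ∫ ω, ((1 - D (X ω)) / (1 - π₁ (X ω))) ^ 2 * μ₀ (X ω) ^ 2 * (1 - A ω) ∂P) := by
      have hpt : ∫ ω, R ω ^ 2 ∂P =
          ∫ ω, ((D (X ω) / π₁ (X ω)) ^ 2 * (A ω * Y ω ^ 2)
            - 2 * ((D (X ω) / π₁ (X ω)) ^ 2 * μ₁ (X ω) * (A ω * Y ω))
            + (D (X ω) / π₁ (X ω)) ^ 2 * μ₁ (X ω) ^ 2 * A ω)
          + (((1 - D (X ω)) / (1 - π₁ (X ω))) ^ 2 * ((1 - A ω) * Y ω ^ 2)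
            - 2 * (((1 - D (X ω)) / (1 - π₁ (X ω))) ^ 2 * μ₀ (X ω) * ((1 - A ω) * Y ω))
            + ((1 - D (X ω)) / (1 - π₁ (X ω))) ^ 2 * μ₀ (X ω) ^ 2 * (1 - A ω)) ∂P :=
        integral_congr_ae (Filter.Eventually.of_forall fun ω => by
          rcases hAbin ω with h | h <;> simp only [hRdef, h] <;> ring)
      rw [hpt, integral_add iA' iB', integral_add iA ia3, integral_sub ia1 ia2',
        integral_add iB ib3, integral_sub ib1 ib2', integral_const_mul 2 _, integral_const_mul 2 _]
    have hsplT : ∫ ω, (D (X ω) ^ 2 * σ₁sq (X ω) / π₁ (X ω)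
          + (1 - D (X ω)) ^ 2 * σ₀sq (X ω) / (1 - π₁ (X ω))) ∂P =
        (∫ ω, (D (X ω) / π₁ (X ω)) ^ 2 * ((μ₁ (X ω) ^ 2 + σ₁sq (X ω)) * π₁ (X ω)) ∂P
          - 2 * ∫ ω, (D (X ω) / π₁ (X ω)) ^ 2 * μ₁ (X ω) * (μ₁ (X ω) * π₁ (X ω)) ∂P
          + ∫ ω, (D (X ω) / π₁ (X ω)) ^ 2 * μ₁ (X ω) ^ 2 * π₁ (X ω) ∂P)
        + (∫ ω, ((1 - D (X ω)) / (1 - π₁ (X ω))) ^ 2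
              * ((μ₀ (X ω) ^ 2 + σ₀sq (X ω)) * (1 - π₁ (X ω))) ∂P
          - 2 * ∫ ω, ((1 - D (X ω)) / (1 - π₁ (X ω))) ^ 2 * μ₀ (X ω)
              * (μ₀ (X ω) * (1 - π₁ (X ω))) ∂P
          + ∫ ω, ((1 - D (X ω)) / (1 - π₁ (X ω))) ^ 2 * μ₀ (X ω) ^ 2 * (1 - π₁ (X ω)) ∂P) := by
      rw [← integral_const_mul 2 _, ← integral_const_mul 2 _, ← integral_sub ja1 ja2',
        ← integral_add jA ja3, ← integral_sub jb1 jb2', ← integral_add jB jb3,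
        ← integral_add jA' jB']
      refine integral_congr_ae (Filter.Eventually.of_forall fun ω => ?_)
      have e1 : (D (X ω) / π₁ (X ω)) ^ 2 * π₁ (X ω) = D (X ω) ^ 2 / π₁ (X ω) := by
        rw [div_pow, sq (π₁ (X ω))]
        rw [div_mul_eq_mul_div, mul_comm (π₁ (X ω)) (π₁ (X ω)), ← div_div,
          mul_div_assoc, div_self (hp0 ω), mul_one]
      have e0 : ((1 - D (X ω)) / (1 - π₁ (X ω))) ^ 2 * (1 - π₁ (X ω))
          = (1 - D (X ω)) ^ 2 / (1 - π₁ (X ω)) := by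
        rw [div_pow, sq (1 - π₁ (X ω))]
        rw [div_mul_eq_mul_div, mul_comm (1 - π₁ (X ω)) (1 - π₁ (X ω)), ← div_div,
          mul_div_assoc, div_self (h1p0 ω), mul_one]
      have key1 : ∀ C : ℝ, (D (X ω) / π₁ (X ω)) ^ 2 * (C * π₁ (X ω))
          = D (X ω) ^ 2 / π₁ (X ω) * C := fun C => by
        rw [← e1]; ring
      have key0 : ∀ C : ℝ, ((1 - D (X ω)) / (1 - π₁ (X ω))) ^ 2 * (C * (1 - π₁ (X ω)))
          = (1 - D (X ω)) ^ 2 / (1 - π₁ (X ω)) * C := fun C => by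
        rw [← e0]; ring
      calc D (X ω) ^ 2 * σ₁sq (X ω) / π₁ (X ω)
            + (1 - D (X ω)) ^ 2 * σ₀sq (X ω) / (1 - π₁ (X ω))
          = (D (X ω) ^ 2 / π₁ (X ω) * (μ₁ (X ω) ^ 2 + σ₁sq (X ω))
              - 2 * (D (X ω) ^ 2 / π₁ (X ω) * (μ₁ (X ω) * μ₁ (X ω)))
              + D (X ω) ^ 2 / π₁ (X ω) * (μ₁ (X ω) ^ 2))
            + ((1 - D (X ω)) ^ 2 / (1 - π₁ (X ω)) * (μ₀ (X ω) ^ 2 + σ₀sq (X ω))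
              - 2 * ((1 - D (X ω)) ^ 2 / (1 - π₁ (X ω)) * (μ₀ (X ω) * μ₀ (X ω)))
              + (1 - D (X ω)) ^ 2 / (1 - π₁ (X ω)) * (μ₀ (X ω) ^ 2)) := by ring
        _ = _ := by
            beta_reduce
            rw [← key1 (μ₁ (X ω) ^ 2 + σ₁sq (X ω)), ← key0 (μ₀ (X ω) ^ 2 + σ₀sq (X ω)),
              ← key1 (μ₁ (X ω) ^ 2), ← key0 (μ₀ (X ω) ^ 2)]
            have k1 : (D (X ω) / π₁ (X ω)) ^ 2 * μ₁ (X ω) * (μ₁ (X ω) * π₁ (X ω))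
                = (D (X ω) / π₁ (X ω)) ^ 2 * (μ₁ (X ω) * μ₁ (X ω) * π₁ (X ω)) := by ring
            have k0 : ((1 - D (X ω)) / (1 - π₁ (X ω))) ^ 2 * μ₀ (X ω)
                  * (μ₀ (X ω) * (1 - π₁ (X ω)))
                = ((1 - D (X ω)) / (1 - π₁ (X ω))) ^ 2
                  * (μ₀ (X ω) * μ₀ (X ω) * (1 - π₁ (X ω))) := by ring
            rw [k1, k0, ← key1 (μ₁ (X ω) * μ₁ (X ω)), ← key0 (μ₀ (X ω) * μ₀ (X ω))]
            ring
    rw [hsplR, K3, K4, K5, K8, K9, K10]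
    exact hsplT.symm
  -- final assembly
  have hRint : Integrable R P := hRL2.integrable one_le_two
  have hgint : Integrable g P := hgL2.integrable one_le_two
  have hR2int : Integrable (fun ω => R ω ^ 2) P := hRL2.integrable_sq
  have hg2int : Integrable (fun ω => g ω ^ 2) P := hgL2.integrable_sq
  have hRgint : Integrable (fun ω => R ω * g ω) P := aux_L2_mul hRL2 hgL2
  have hRg2int : Integrable (fun ω => 2 * (R ω * g ω)) P := hRgint.const_mul 2
  have hRg2g2int : Integrable (fun ω => 2 * (R ω * g ω) + g ω ^ 2) P := hRg2int.add hg2int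
  have hψL2 : MemLp (fun ω => R ω + g ω) 2 P := hRL2.add hgL2
  rw [haipw, variance_eq_sub hψL2, variance_eq_sub hgL2]
  simp only [Pi.pow_apply]
  have e1 : ∫ ω, (R ω + g ω) ^ 2 ∂P
      = ∫ ω, R ω ^ 2 ∂P + (2 * ∫ ω, R ω * g ω ∂P + ∫ ω, g ω ^ 2 ∂P) := by
    rw [← integral_const_mul 2 _, ← integral_add hRg2int hg2int,
      ← integral_add hR2int hRg2g2int]
    exact integral_congr_ae (Filter.Eventually.of_forall fun ω => by ring)
  have e2 : ∫ ω, (R ω + g ω) ∂P = ∫ ω, R ω ∂P + ∫ ω, g ω ∂P := integral_add hRint hgint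
  rw [e1, e2, hER, hERg, hER2]
  ring
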